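/- For every t ∈ ℝ and every τ ∈ ℂ, the function M_t admits the power-series expansion M_t(τ) = Σ_{γ=0}^∞ α_{2γ} τ^{2γ}, where α_{2γ} = (1/(2γ)!) ∫₀^∞ exp(−t x²) G(x) x^{2γ} dx, and this series converges for all τ ∈ ℂ. -/

import Mathlib

open MeasureTheory

/-- `G x = Σ_{m=1}^∞ (2π²m⁴ e^{9x} − 3πm² e^{5x}) e^{−πm² e^{4x}}`. -/
noncomputable def G (x : ℝ) : ℝ :=
  ∑' m : ℕ, (2 * Real.pi ^ 2 * ((m : ℝ) + 1) ^ 4 * Real.exp (9 * x)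
      - 3 * Real.pi * ((m : ℝ) + 1) ^ 2 * Real.exp (5 * x))
    * Real.exp (-(Real.pi * ((m : ℝ) + 1) ^ 2 * Real.exp (4 * x)))

/-- `M t τ = ∫₀^∞ e^{−t x²} G x cosh (τ x) dx`. -/
noncomputable def M (t : ℝ) (τ : ℂ) : ℂ :=
  ∫ x in Set.Ioi (0 : ℝ),
    ((Real.exp (-(t * x ^ 2)) * G x : ℝ) : ℂ) * Complex.cosh (τ * (x : ℂ))

/-- `Ξ t λ = ∫₀^∞ e^{−t x²} G x cos (λ x) dx`. -/
noncomputable def Xi (t : ℝ) (l : ℂ) : ℂ :=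
  ∫ x in Set.Ioi (0 : ℝ),
    ((Real.exp (-(t * x ^ 2)) * G x : ℝ) : ℂ) * Complex.cos (l * (x : ℂ))

/-- `α t γ = (1/(2γ)!) ∫₀^∞ e^{−t x²} G x x^{2γ} dx`. -/
noncomputable def α (t : ℝ) (γ : ℕ) : ℝ :=
  (1 / (Nat.factorial (2 * γ) : ℝ)) *
    ∫ x in Set.Ioi (0 : ℝ), Real.exp (-(t * x ^ 2)) * G x * x ^ (2 * γ)

namespace Maux

noncomputable def Gterm (m : ℕ) (x : ℝ) : ℝ :=
  (2 * Real.pi ^ 2 * ((m : ℝ) + 1) ^ 4 * Real.exp (9 * x)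
      - 3 * Real.pi * ((m : ℝ) + 1) ^ 2 * Real.exp (5 * x))
    * Real.exp (-(Real.pi * ((m : ℝ) + 1) ^ 2 * Real.exp (4 * x)))

lemma G_eq (x : ℝ) : G x = ∑' m, Gterm m x := rfl

lemma summable_shift {r : ℝ} (h1 : |r| < 1) :
    Summable (fun m : ℕ => ((m : ℝ) + 1) ^ 4 * r ^ (m + 1)) := by
  have h := summable_pow_mul_geometric_of_norm_lt_one (R := ℝ) 4
    (by simpa [Real.norm_eq_abs] using h1)
  have h2 := (summable_nat_add_iff (f := fun n : ℕ => (n : ℝ) ^ 4 * r ^ n) 1).2 h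
  refine h2.congr fun n => by push_cast; ring

lemma Gterm_abs_le (m : ℕ) (x : ℝ) :
    |Gterm m x| ≤ (2 * Real.pi ^ 2 * Real.exp (9 * x) + 3 * Real.pi * Real.exp (5 * x))
      * (((m : ℝ) + 1) ^ 4
        * Real.exp (-(Real.pi * ((m : ℝ) + 1) ^ 2 * Real.exp (4 * x)))) := by
  have hpi := Real.pi_pos
  have hm : (1:ℝ) ≤ (m:ℝ) + 1 := by have := Nat.cast_nonneg (α := ℝ) m; linarith
  have h2 : ((m:ℝ)+1)^2 ≤ ((m:ℝ)+1)^4 := by nlinarith [sq_nonneg ((m:ℝ)+1), sq_nonneg (((m:ℝ)+1)^2 - ((m:ℝ)+1))]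
  have e9 := Real.exp_pos (9*x)
  have e5 := Real.exp_pos (5*x)
  rw [Gterm, abs_mul, Real.abs_exp]
  have hA : |2 * Real.pi ^ 2 * ((m : ℝ) + 1) ^ 4 * Real.exp (9 * x)
      - 3 * Real.pi * ((m : ℝ) + 1) ^ 2 * Real.exp (5 * x)|
      ≤ (2 * Real.pi ^ 2 * Real.exp (9 * x) + 3 * Real.pi * Real.exp (5 * x))
        * ((m:ℝ)+1)^4 := by
    rw [abs_le]
    constructor <;> nlinarith [mul_pos (mul_pos (by positivity : (0:ℝ) < 3*Real.pi) e5) (by positivity : (0:ℝ) < ((m:ℝ)+1)^2), mul_nonneg (mul_nonneg (by positivity : (0:ℝ) ≤ 3*Real.pi) e5.le) (sub_nonneg.2 h2), mul_pos (mul_pos (by positivity : (0:ℝ) < 2*Real.pi^2) e9) (by positivity : (0:ℝ) < ((m:ℝ)+1)^4)]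
  calc _ ≤ ((2 * Real.pi ^ 2 * Real.exp (9 * x) + 3 * Real.pi * Real.exp (5 * x))
        * ((m:ℝ)+1)^4) * Real.exp (-(Real.pi * ((m : ℝ) + 1) ^ 2 * Real.exp (4 * x))) := by
        exact mul_le_mul_of_nonneg_right hA (Real.exp_nonneg _)
    _ = _ := by ring

lemma Gterm_summable (x : ℝ) : Summable fun m => Gterm m x := by
  set r := Real.exp (-(Real.pi * Real.exp (4*x))) with hr
  have hr0 : 0 < r := Real.exp_pos _
  have hr1 : r < 1 := by
    rw [hr, Real.exp_lt_one_iff]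
    have := Real.pi_pos
    have := Real.exp_pos (4*x)
    nlinarith
  refine Summable.of_norm_bounded
    (g := fun m => (2 * Real.pi ^ 2 * Real.exp (9 * x) + 3 * Real.pi * Real.exp (5 * x))
      * (((m:ℝ)+1)^4 * r^(m+1)))
    ((summable_shift (by rwa [abs_of_pos hr0])).mul_left _) (fun m => ?_)
  rw [Real.norm_eq_abs]
  refine (Gterm_abs_le m x).trans ?_
  have hpi := Real.pi_pos
  have hE := Real.exp_pos (4*x)
  have hm : (1:ℝ) ≤ (m:ℝ) + 1 := by have := Nat.cast_nonneg (α := ℝ) m; linarith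
  refine mul_le_mul_of_nonneg_left (mul_le_mul_of_nonneg_left ?_ (by positivity)) (by positivity)
  rw [hr, ← Real.exp_nat_mul, Real.exp_le_exp]
  push_cast
  nlinarith [mul_nonneg (mul_nonneg hpi.le hE.le) (mul_nonneg (Nat.cast_nonneg (α := ℝ) m) (by linarith : (0:ℝ) ≤ (m:ℝ)+1))]

lemma S_summable : Summable fun m : ℕ =>
    ((m:ℝ)+1)^4 * Real.exp (-(Real.pi/2 * ((m:ℝ)+1)^2)) := by
  have hr : |Real.exp (-1 : ℝ)| < 1 := by
    rw [abs_of_pos (Real.exp_pos _), Real.exp_lt_one_iff]; norm_num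
  refine Summable.of_nonneg_of_le (fun m => by positivity) (fun m => ?_) (summable_shift hr)
  have hm : (1:ℝ) ≤ (m:ℝ) + 1 := by have := Nat.cast_nonneg (α := ℝ) m; linarith
  have hpi : (2:ℝ) ≤ Real.pi := by nlinarith [Real.pi_gt_three]
  refine mul_le_mul_of_nonneg_left ?_ (by positivity)
  rw [← Real.exp_nat_mul, Real.exp_le_exp]
  push_cast
  nlinarith [mul_nonneg (Nat.cast_nonneg (α := ℝ) m) (by linarith : (0:ℝ) ≤ (m:ℝ)+1)]

noncomputable def S : ℝ := ∑' m : ℕ, ((m:ℝ)+1)^4 * Real.exp (-(Real.pi/2 * ((m:ℝ)+1)^2))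

noncomputable def C0 : ℝ := (2*Real.pi^2 + 3*Real.pi) * S

lemma S_nonneg : 0 ≤ S := tsum_nonneg fun m => by positivity

lemma C0_nonneg : 0 ≤ C0 := by
  have := Real.pi_pos
  exact mul_nonneg (by positivity) S_nonneg

lemma G_abs_le {x : ℝ} (hx : 0 ≤ x) :
    |G x| ≤ C0 * (Real.exp (9*x) * Real.exp (-(Real.pi/2 * Real.exp (4*x)))) := by
  have hpi := Real.pi_pos
  have hE1 : (1:ℝ) ≤ Real.exp (4*x) := Real.one_le_exp (by linarith)
  have h1 : ∀ m : ℕ, ‖Gterm m x‖ ≤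
      ((2*Real.pi^2 + 3*Real.pi) * (Real.exp (9*x) * Real.exp (-(Real.pi/2 * Real.exp (4*x)))))
        * (((m:ℝ)+1)^4 * Real.exp (-(Real.pi/2 * ((m:ℝ)+1)^2))) := by
    intro m
    rw [Real.norm_eq_abs]
    refine (Gterm_abs_le m x).trans ?_
    have hm : (1:ℝ) ≤ (m:ℝ) + 1 := by have := Nat.cast_nonneg (α := ℝ) m; linarith
    have hm2 : (1:ℝ) ≤ ((m:ℝ)+1)^2 := one_le_pow₀ hm
    have e59 : Real.exp (5*x) ≤ Real.exp (9*x) := Real.exp_le_exp.2 (by linarith)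
    calc (2 * Real.pi ^ 2 * Real.exp (9 * x) + 3 * Real.pi * Real.exp (5 * x))
          * (((m : ℝ) + 1) ^ 4 * Real.exp (-(Real.pi * ((m : ℝ) + 1) ^ 2 * Real.exp (4 * x))))
        ≤ ((2*Real.pi^2 + 3*Real.pi) * Real.exp (9*x))
          * (((m : ℝ) + 1) ^ 4 *
            (Real.exp (-(Real.pi/2 * Real.exp (4*x))) * Real.exp (-(Real.pi/2 * ((m:ℝ)+1)^2)))) := by
          refine mul_le_mul (by nlinarith) (mul_le_mul_of_nonneg_left ?_ (by positivity))
            (by positivity) (by positivity)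
          rw [← Real.exp_add, Real.exp_le_exp]
          nlinarith [mul_nonneg (mul_nonneg hpi.le (by linarith : (0:ℝ) ≤ ((m:ℝ)+1)^2 - 1)) (by linarith : (0:ℝ) ≤ Real.exp (4*x) - 1), mul_nonneg hpi.le (by linarith : (0:ℝ) ≤ ((m:ℝ)+1)^2 - 1), mul_nonneg hpi.le (by linarith : (0:ℝ) ≤ Real.exp (4*x) - 1)]
      _ = _ := by ring
  have hs : HasSum (fun m : ℕ =>
      ((2*Real.pi^2 + 3*Real.pi) * (Real.exp (9*x) * Real.exp (-(Real.pi/2 * Real.exp (4*x)))))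
        * (((m:ℝ)+1)^4 * Real.exp (-(Real.pi/2 * ((m:ℝ)+1)^2))))
      (((2*Real.pi^2 + 3*Real.pi) * (Real.exp (9*x) * Real.exp (-(Real.pi/2 * Real.exp (4*x))))) * S) :=
    S_summable.hasSum.mul_left _
  have := tsum_of_norm_bounded hs h1
  rw [← G_eq, Real.norm_eq_abs] at this
  calc |G x| ≤ _ := this
    _ = C0 * (Real.exp (9*x) * Real.exp (-(Real.pi/2 * Real.exp (4*x)))) := by rw [C0]; ring

lemma G_measurable : Measurable G := by
  have hterm : ∀ m : ℕ, Measurable (Gterm m) := by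
    intro m; unfold Gterm; fun_prop
  apply measurable_of_tendsto_metrizable' (u := Filter.atTop)
    (f := fun n x => ∑ i ∈ Finset.range n, Gterm i x)
    (fun n => Finset.measurable_sum _ fun i _ => hterm i)
  rw [tendsto_pi_nhds]
  intro x
  rw [G_eq]
  exact (Gterm_summable x).hasSum.tendsto_sum_nat

lemma key_bound (t c : ℝ) : ∃ K : ℝ, ∀ x : ℝ, 0 ≤ x →
    -(t*x^2) + 9*x + c*x + x ≤ Real.pi/2 * Real.exp (4*x) + K := by
  obtain ⟨B, hB⟩ : ∃ B : ℝ, B = |t| + |c| + 10 := ⟨_, rfl⟩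
  have hB10 : (10:ℝ) ≤ B := by
    have := abs_nonneg t; have := abs_nonneg c; linarith
  refine ⟨B^3 + B^2, fun x hx => ?_⟩
  have hcube : 15 * x^3 ≤ Real.pi/2 * Real.exp (4*x) := by
    have h := Real.pow_div_factorial_le_exp (4*x) (by positivity) 3
    have hπ : (3:ℝ) ≤ Real.pi := Real.pi_gt_three.le
    have hE := Real.exp_pos (4*x)
    norm_num [Nat.factorial] at h
    nlinarith [pow_nonneg hx 3]
  have habs : -(t*x^2) + 9*x + c*x + x ≤ B*x^2 + B*x := by
    have h1 : -(t*x^2) ≤ |t| * x^2 := by nlinarith [neg_abs_le t, sq_nonneg x]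
    have h2 : c*x ≤ |c| * x := mul_le_mul_of_nonneg_right (le_abs_self c) hx
    have h3 : 0 ≤ (|c| + 10) * x^2 := by positivity
    have h4 : 0 ≤ |t| * x := by positivity
    rw [hB]; nlinarith
  rcases le_total x B with h | h
  · have hB0 : (0:ℝ) ≤ B := by linarith
    nlinarith [habs, mul_le_mul_of_nonneg_left (mul_self_le_mul_self hx h) hB0,
      mul_le_mul_of_nonneg_left h hB0,
      mul_nonneg (by positivity : (0:ℝ) ≤ Real.pi/2) (Real.exp_pos (4*x)).le]
  · have hx1 : (1:ℝ) ≤ x := by linarith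
    nlinarith [mul_le_mul_of_nonneg_right h (sq_nonneg x),
      mul_le_mul_of_nonneg_right h hx,
      mul_le_mul_of_nonneg_right hx1 (sq_nonneg x)]

lemma key_int (t c : ℝ) :
    IntegrableOn (fun x => Real.exp (-(t*x^2)) * |G x| * Real.exp (c*x)) (Set.Ioi 0) := by
  obtain ⟨K, hK⟩ := key_bound t c
  refine Integrable.mono' (g := fun x => (C0 * Real.exp K) * Real.exp (-x)) ?_ ?_ ?_
  · simpa using (exp_neg_integrableOn_Ioi 0 (by norm_num : (0:ℝ) < 1)).const_mul
      (C0 * Real.exp K)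
  · exact ((Measurable.mul (by fun_prop) G_measurable.abs).mul (by fun_prop)).aestronglyMeasurable
  · filter_upwards [ae_restrict_mem measurableSet_Ioi] with x hx
    have hx0 : (0:ℝ) ≤ x := (Set.mem_Ioi.1 hx).le
    rw [Real.norm_eq_abs, abs_of_nonneg (by positivity)]
    calc Real.exp (-(t*x^2)) * |G x| * Real.exp (c*x)
        ≤ Real.exp (-(t*x^2)) * (C0 * (Real.exp (9*x) * Real.exp (-(Real.pi/2 * Real.exp (4*x)))))
          * Real.exp (c*x) := by
          refine mul_le_mul_of_nonneg_right (mul_le_mul_of_nonneg_left (G_abs_le hx0)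
            (Real.exp_nonneg _)) (Real.exp_nonneg _)
      _ = C0 * Real.exp (-(t*x^2) + 9*x + -(Real.pi/2 * Real.exp (4*x)) + c*x) := by
          rw [Real.exp_add, Real.exp_add, Real.exp_add]; ring
      _ ≤ C0 * Real.exp (K + -x) := by
          refine mul_le_mul_of_nonneg_left (Real.exp_le_exp.2 ?_) C0_nonneg
          have := hK x hx0; linarith
      _ = (C0 * Real.exp K) * Real.exp (-x) := by rw [Real.exp_add]; ring



lemma r_meas (t : ℝ) (γ : ℕ) :
    Measurable (fun x : ℝ => Real.exp (-(t*x^2)) * G x * x ^ (2*γ)) := by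
  exact ((Real.measurable_exp.comp (by fun_prop)).mul G_measurable).mul (by fun_prop)

lemma r_int (t : ℝ) (γ : ℕ) :
    IntegrableOn (fun x => Real.exp (-(t*x^2)) * G x * x ^ (2*γ)) (Set.Ioi 0) := by
  refine Integrable.mono'
    (g := fun x => ((2*γ).factorial : ℝ) * (Real.exp (-(t*x^2)) * |G x| * Real.exp (1*x)))
    ((key_int t 1).const_mul _) ((r_meas t γ).aestronglyMeasurable) ?_
  filter_upwards [ae_restrict_mem measurableSet_Ioi] with x hx
  have hx0 : (0:ℝ) ≤ x := (Set.mem_Ioi.1 hx).le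
  have hpow : x ^ (2*γ) ≤ ((2*γ).factorial : ℝ) * Real.exp x := by
    have h := Real.pow_div_factorial_le_exp x hx0 (2*γ)
    have hf : (0:ℝ) < ((2*γ).factorial : ℝ) := by positivity
    rw [div_le_iff₀ hf] at h
    linarith [h]
  rw [Real.norm_eq_abs, abs_mul, abs_mul, Real.abs_exp, abs_pow, abs_of_nonneg hx0, one_mul]
  calc Real.exp (-(t*x^2)) * |G x| * x ^ (2*γ)
      ≤ Real.exp (-(t*x^2)) * |G x| * (((2*γ).factorial : ℝ) * Real.exp x) := by
        exact mul_le_mul_of_nonneg_left hpow (by positivity)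
    _ = ((2*γ).factorial : ℝ) * (Real.exp (-(t*x^2)) * |G x| * Real.exp x) := by ring

end Maux

/-- the power-series expansion of `M t` with coefficients `α t γ`,
converging (as a sum) for every `τ ∈ ℂ`. -/
theorem M_hasSum_powerSeries (t : ℝ) (τ : ℂ) :
    HasSum (fun γ : ℕ => ((α t γ : ℝ) : ℂ) * τ ^ (2 * γ)) (M t τ) := by
  classical
  set F : ℕ → ℝ → ℂ := fun γ x =>
    ((Real.exp (-(t * x ^ 2)) * G x * x ^ (2 * γ) : ℝ) : ℂ)
      * (τ ^ (2 * γ) / ((2 * γ).factorial : ℂ)) with hF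
  have h_int : ∀ γ : ℕ, Integrable (F γ) (volume.restrict (Set.Ioi (0:ℝ))) := by
    intro γ
    exact ((Maux.r_int t γ).ofReal (𝕜 := ℂ)).mul_const _
  have h_bint : IntegrableOn
      (fun x => Real.exp (-(t*x^2)) * |G x| * Real.exp (2*‖τ‖*x)) (Set.Ioi 0) :=
    Maux.key_int t _
  have h_norm_le : ∀ γ : ℕ, (∫ x in Set.Ioi (0:ℝ), ‖F γ x‖) ≤
      (∫ x in Set.Ioi (0:ℝ), Real.exp (-(t*x^2)) * |G x| * Real.exp (2*‖τ‖*x)) * (1/4)^γ := by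
    intro γ
    have hle : ∀ x ∈ Set.Ioi (0:ℝ), ‖F γ x‖ ≤
        (Real.exp (-(t*x^2)) * |G x| * Real.exp (2*‖τ‖*x)) * (1/4:ℝ)^γ := by
      intro x hx
      have hx0 : (0:ℝ) ≤ x := (Set.mem_Ioi.1 hx).le
      have hτ : (0:ℝ) ≤ ‖τ‖ := norm_nonneg τ
      have hf : (0:ℝ) < ((2*γ).factorial : ℝ) := by positivity
      have hkey : x^(2*γ) * (‖τ‖^(2*γ) / ((2*γ).factorial : ℝ)) ≤
          Real.exp (2*‖τ‖*x) * (1/4:ℝ)^γ := by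
        have h := Real.pow_div_factorial_le_exp (2*‖τ‖*x) (by positivity) (2*γ)
        rw [div_le_iff₀ hf] at h
        have h3 : (2*‖τ‖*x)^(2*γ) = 4^γ * (‖τ‖^(2*γ) * x^(2*γ)) := by
          rw [mul_pow, mul_pow, pow_mul]; norm_num; ring
        rw [h3] at h
        calc x^(2*γ) * (‖τ‖^(2*γ) / ((2*γ).factorial : ℝ))
            = ((4:ℝ)^γ)⁻¹ * (4^γ * (‖τ‖^(2*γ) * x^(2*γ))) / ((2*γ).factorial : ℝ) := by
              field_simp
          _ ≤ ((4:ℝ)^γ)⁻¹ * (Real.exp (2*‖τ‖*x) * ((2*γ).factorial : ℝ)) / ((2*γ).factorial : ℝ) := by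
              gcongr
          _ = Real.exp (2*‖τ‖*x) * (1/4:ℝ)^γ := by
              rw [one_div, inv_pow]; field_simp
      have hnorm : ‖F γ x‖ = (Real.exp (-(t*x^2)) * |G x| * x^(2*γ))
          * (‖τ‖^(2*γ) / ((2*γ).factorial : ℝ)) := by
        rw [hF]
        simp only [norm_mul, norm_div, norm_pow, Complex.norm_real, Real.norm_eq_abs,
          Complex.norm_natCast, abs_mul, Real.abs_exp, abs_pow, abs_of_nonneg hx0]
      rw [hnorm]
      calc (Real.exp (-(t*x^2)) * |G x| * x^(2*γ)) * (‖τ‖^(2*γ) / ((2*γ).factorial : ℝ))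
          = (Real.exp (-(t*x^2)) * |G x|) * (x^(2*γ) * (‖τ‖^(2*γ) / ((2*γ).factorial : ℝ))) := by
            ring
        _ ≤ (Real.exp (-(t*x^2)) * |G x|) * (Real.exp (2*‖τ‖*x) * (1/4:ℝ)^γ) := by
            exact mul_le_mul_of_nonneg_left hkey (by positivity)
        _ = (Real.exp (-(t*x^2)) * |G x| * Real.exp (2*‖τ‖*x)) * (1/4:ℝ)^γ := by ring
    have hmono := setIntegral_mono_on (μ := volume) ((h_int γ).norm)
      (h_bint.mul_const ((1/4:ℝ)^γ)) measurableSet_Ioi hle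
    calc (∫ x in Set.Ioi (0:ℝ), ‖F γ x‖) ≤ _ := hmono
      _ = (∫ x in Set.Ioi (0:ℝ),
            Real.exp (-(t*x^2)) * |G x| * Real.exp (2*‖τ‖*x)) * (1/4)^γ := by
          rw [integral_mul_const]
  have h_sum : Summable (fun γ : ℕ => ∫ x in Set.Ioi (0:ℝ), ‖F γ x‖) := by
    refine Summable.of_nonneg_of_le
      (fun γ => integral_nonneg (fun x => norm_nonneg _)) h_norm_le ?_
    exact (summable_geometric_of_lt_one (by norm_num) (by norm_num)).mul_left _
  have H := hasSum_integral_of_summable_integral_norm h_int h_sum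
  have h1 : ∀ γ : ℕ, (∫ x in Set.Ioi (0:ℝ), F γ x) = ((α t γ : ℝ) : ℂ) * τ^(2*γ) := by
    intro γ
    rw [hF]
    simp only
    rw [integral_mul_const]
    have key : (∫ a in Set.Ioi (0:ℝ), ((Real.exp (-(t*a^2)) * G a * a^(2*γ) : ℝ) : ℂ))
        = ((∫ a in Set.Ioi (0:ℝ), Real.exp (-(t*a^2)) * G a * a^(2*γ) : ℝ) : ℂ) :=
      integral_ofReal
    rw [key, α]
    push_cast
    ring
  have h2 : (∫ x in Set.Ioi (0:ℝ), ∑' γ : ℕ, F γ x) = M t τ := by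
    rw [M]
    refine integral_congr_ae (Filter.Eventually.of_forall fun x => ?_)
    have hc : HasSum (fun γ : ℕ => ((Real.exp (-(t*x^2)) * G x : ℝ) : ℂ)
          * ((τ*(x:ℂ))^(2*γ) / ((2*γ).factorial : ℂ)))
        (((Real.exp (-(t*x^2)) * G x : ℝ) : ℂ) * Complex.cosh (τ*(x:ℂ))) :=
      (Complex.hasSum_cosh (τ*(x:ℂ))).mul_left _
    have he : ∀ γ : ℕ, F γ x = ((Real.exp (-(t*x^2)) * G x : ℝ) : ℂ)
        * ((τ*(x:ℂ))^(2*γ) / ((2*γ).factorial : ℂ)) := by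
      intro γ; rw [hF]; push_cast; ring
    exact (tsum_congr he).trans hc.tsum_eq
  rw [← h2]
  exact (funext h1 : (fun γ : ℕ => ∫ x in Set.Ioi (0:ℝ), F γ x) = _) ▸ H
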